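/- Let d ≥ 1, let ρ > 0, L_g > 0, and γ > 0 satisfy γρ < 1 and γL_g < 1. Let g : ℝ^d → ℝ be ρ-weakly convex and twice continuously differentiable, and suppose that the Hessian of g satisfies ‖∇²g(z)‖ ≤ L_g (in operator norm) for every z in the image Prox_{γg}(ℝ^d). Then for every x ∈ ℝ^d the linear map I + γ∇²g(Prox_{γg}(x)) is invertible, Prox_{γg} is differentiable at x with derivative ∇Prox_{γg}(x) = (I + γ∇²g(Prox_{γg}(x)))⁻¹, and the Moreau envelope g^γ is twice differentiable at x with Hessian ∇²g^γ(x) = (1/γ)(I − (I + γ∇²g(Prox_{γg}(x)))⁻¹). -/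

import Mathlib

set_option maxHeartbeats 1000000

open scoped RealInnerProductSpace

variable {E : Type*} [NormedAddCommGroup E] [InnerProductSpace ℝ E] [CompleteSpace E]

lemma aux_hasFDerivAt_sqnorm (c : ℝ) (y w : E) :
    HasFDerivAt (fun w : E => c * ‖w - y‖ ^ 2)
      ((InnerProductSpace.toDual ℝ E) ((2 * c) • (w - y))) w := by
  have h1 : HasFDerivAt (fun w : E => w - y) (ContinuousLinearMap.id ℝ E) w :=
    (hasFDerivAt_id w).sub_const y
  have h2 := ((h1.inner ℝ h1).const_mul c)
  have heq : (fun w : E => c * ‖w - y‖ ^ 2) = fun w : E => c * ⟪w - y, w - y⟫ := by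
    funext u; rw [real_inner_self_eq_norm_sq]
  rw [heq]
  refine h2.congr_fderiv ?_
  ext u
  simp only [fderivInnerCLM_apply, InnerProductSpace.toDual_apply_apply, real_inner_smul_left,
    ContinuousLinearMap.coe_comp', Function.comp_apply, ContinuousLinearMap.prod_apply,
    ContinuousLinearMap.coe_id', id_eq, ContinuousLinearMap.smul_apply, smul_eq_mul]
  rw [real_inner_comm u (w - y)]
  ring

lemma aux_hasGradientAt_sqnorm (c : ℝ) (y w : E) :
    HasGradientAt (fun w : E => c * ‖w - y‖ ^ 2) ((2 * c) • (w - y)) w := by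
  have := (aux_hasFDerivAt_sqnorm c y w).hasGradientAt
  simpa using this

lemma aux_convex_first_order {h : E → ℝ} (hconv : ConvexOn ℝ Set.univ h)
    (a b : E) {v : E} (ha : HasGradientAt h v a) : ⟪v, b - a⟫ ≤ h b - h a := by
  set φ : ℝ → ℝ := fun t => h (a + t • (b - a)) with hφ
  have hline : ∀ t : ℝ, HasDerivAt (fun t : ℝ => a + t • (b - a)) (b - a) t := by
    intro t
    simpa using ((hasDerivAt_id t).smul_const (b - a)).const_add a
  have hderiv : HasDerivAt φ ⟪v, b - a⟫ 0 := by
    have ha' : HasFDerivAt h ((InnerProductSpace.toDual ℝ E) v) (a + (0:ℝ) • (b - a)) := by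
      simpa using ha.hasFDerivAt
    have := ha'.comp_hasDerivAt 0 (hline 0)
    simp [InnerProductSpace.toDual_apply_apply] at this
    exact this
  have hslope : Filter.Tendsto (slope φ 0) (nhdsWithin 0 (Set.Ioi 0)) (nhds ⟪v, b - a⟫) := by
    exact (hasDerivAt_iff_tendsto_slope.1 hderiv).mono_left
      (nhdsWithin_mono 0 (fun t ht => ne_of_gt ht))
  have hbound : ∀ᶠ t in nhdsWithin 0 (Set.Ioi 0), slope φ 0 t ≤ φ 1 - φ 0 := by
    filter_upwards [Ioc_mem_nhdsGT_of_mem (Set.left_mem_Ico.2 one_pos)] with t ht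
    have ht0 : (0:ℝ) < t := ht.1
    have hcomb : a + t • (b - a) = (1 - t) • a + t • b := by module
    have := hconv.2 (Set.mem_univ a) (Set.mem_univ b) (by linarith [ht.2] : (0:ℝ) ≤ 1 - t)
      (le_of_lt ht0) (by ring)
    rw [smul_eq_mul, smul_eq_mul] at this
    have hφt : φ t ≤ (1 - t) * h a + t * h b := by rw [hφ]; simpa [hcomb] using this
    have hφ0 : φ 0 = h a := by simp [hφ]
    have hφ1 : φ 1 = h b := by simp [hφ]
    rw [slope_def_field, sub_zero, div_le_iff₀ ht0]
    nlinarith [hφt]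
  have := le_of_tendsto hslope hbound
  have hφ0 : φ 0 = h a := by simp [hφ]
  have hφ1 : φ 1 = h b := by simp [hφ]
  linarith [this]

lemma aux_strong_mono {g : E → ℝ} {g' : E → E} (ρ γ : ℝ) (hγ : 0 ≤ γ)
    (hweak : ConvexOn ℝ Set.univ (fun x => g x + ρ / 2 * ‖x‖ ^ 2))
    (hg' : ∀ x, HasGradientAt g (g' x) x) (a b : E) :
    (1 - γ * ρ) * ‖a - b‖ ^ 2 ≤ ⟪(a + γ • g' a) - (b + γ • g' b), a - b⟫ := by
  have hgrad : ∀ p : E, HasGradientAt (fun x => g x + ρ / 2 * ‖x‖ ^ 2) (g' p + ρ • p) p := by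
    intro p
    rw [hasGradientAt_iff_hasFDerivAt, map_add]
    refine ((hg' p).hasFDerivAt).add ?_
    have h0 := aux_hasFDerivAt_sqnorm (ρ/2) (0:E) p
    simp only [sub_zero] at h0
    rwa [show (2 * (ρ/2)) = ρ by ring] at h0
  have h1 := aux_convex_first_order hweak a b (hgrad a)
  have h2 := aux_convex_first_order hweak b a (hgrad b)
  rw [show b - a = -(a - b) by abel, inner_neg_right] at h1
  simp only [inner_add_left, real_inner_smul_left] at h1 h2
  have key : -(ρ * ‖a - b‖ ^ 2) ≤ ⟪g' a - g' b, a - b⟫ := by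
    have hsq : ⟪a, a - b⟫ - ⟪b, a - b⟫ = ‖a - b‖ ^ 2 := by
      rw [← inner_sub_left, real_inner_self_eq_norm_sq]
    rw [inner_sub_left, ← hsq]
    linarith [h1, h2]
  have e1 : (a + γ • g' a) - (b + γ • g' b) = (a - b) + γ • (g' a - g' b) := by module
  rw [e1, inner_add_left, real_inner_smul_left, real_inner_self_eq_norm_sq]
  nlinarith [mul_le_mul_of_nonneg_left key hγ]


/-- For `g` ρ-weakly convex and twice continuously differentiable, with
`γρ < 1`, `γL_g < 1`, and `‖∇²g(z)‖ ≤ L_g` on the image of `Prox_{γg}`, the map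
`I + γ∇²g(Prox_{γg}(x))` is invertible, `Prox_{γg}` is differentiable at every `x` with
derivative the inverse of that map, and the Moreau envelope is twice differentiable at
`x` with Hessian `(1/γ)(I − (I + γ∇²g(Prox_{γg}(x)))⁻¹)` (the Hessian being the
derivative of the gradient map `z ↦ (1/γ)(z − Prox_{γg}(z))` of `g^γ`). -/
theorem prox_derivative_and_moreau_hessian (d : ℕ) (hd : 1 ≤ d) (ρ Lg γ : ℝ)
    (hρ : 0 < ρ) (hLg : 0 < Lg) (hγ : 0 < γ) (hγρ : γ * ρ < 1) (hγLg : γ * Lg < 1)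
    (g : EuclideanSpace ℝ (Fin d) → ℝ)
    (hweak : ConvexOn ℝ Set.univ (fun x => g x + ρ / 2 * ‖x‖ ^ 2))
    (g' : EuclideanSpace ℝ (Fin d) → EuclideanSpace ℝ (Fin d))
    (g'' : EuclideanSpace ℝ (Fin d) →
      (EuclideanSpace ℝ (Fin d) →L[ℝ] EuclideanSpace ℝ (Fin d)))
    (hg' : ∀ x, HasGradientAt g (g' x) x)
    (hg'' : ∀ x, HasFDerivAt g' (g'' x) x)
    (hg''cont : Continuous g'')
    (prox : EuclideanSpace ℝ (Fin d) → EuclideanSpace ℝ (Fin d))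
    (hprox : ∀ x y : EuclideanSpace ℝ (Fin d),
      1 / (2 * γ) * ‖x - prox x‖ ^ 2 + g (prox x)
        ≤ 1 / (2 * γ) * ‖x - y‖ ^ 2 + g y)
    (hbound : ∀ z ∈ Set.range prox, ‖g'' z‖ ≤ Lg) :
    (∀ z : EuclideanSpace ℝ (Fin d),
      HasGradientAt
        (fun w : EuclideanSpace ℝ (Fin d) =>
          ⨅ y : EuclideanSpace ℝ (Fin d), 1 / (2 * γ) * ‖w - y‖ ^ 2 + g y)
        (γ⁻¹ • (z - prox z)) z) ∧
    ∀ x : EuclideanSpace ℝ (Fin d),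
      ∃ A : EuclideanSpace ℝ (Fin d) →L[ℝ] EuclideanSpace ℝ (Fin d),
        ((1 : EuclideanSpace ℝ (Fin d) →L[ℝ] EuclideanSpace ℝ (Fin d))
            + γ • g'' (prox x)) * A = 1 ∧
        A * ((1 : EuclideanSpace ℝ (Fin d) →L[ℝ] EuclideanSpace ℝ (Fin d))
            + γ • g'' (prox x)) = 1 ∧
        HasFDerivAt prox A x ∧
        HasFDerivAt (fun z : EuclideanSpace ℝ (Fin d) => γ⁻¹ • (z - prox z))
          (γ⁻¹ • ((1 : EuclideanSpace ℝ (Fin d) →L[ℝ] EuclideanSpace ℝ (Fin d)) - A))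
          x := by
  classical
  have hγ0 : γ ≠ 0 := ne_of_gt hγ
  have hγρ' : (0:ℝ) < 1 - γ * ρ := by linarith
  set F : EuclideanSpace ℝ (Fin d) → EuclideanSpace ℝ (Fin d) := fun y => y + γ • g' y with hFdef
  -- first order condition
  have foc : ∀ x : EuclideanSpace ℝ (Fin d), F (prox x) = x := by
    intro x
    have hmin : IsLocalMin (fun y : EuclideanSpace ℝ (Fin d) => 1 / (2 * γ) * ‖x - y‖ ^ 2 + g y) (prox x) :=
      Filter.Eventually.of_forall (fun y => hprox x y)
    have hf1 : HasFDerivAt (fun y : EuclideanSpace ℝ (Fin d) => 1 / (2 * γ) * ‖x - y‖ ^ 2)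
        ((InnerProductSpace.toDual ℝ (EuclideanSpace ℝ (Fin d))) (γ⁻¹ • (prox x - x))) (prox x) := by
      have heq : (fun y : EuclideanSpace ℝ (Fin d) => 1 / (2 * γ) * ‖x - y‖ ^ 2)
          = fun y : EuclideanSpace ℝ (Fin d) => 1 / (2 * γ) * ‖y - x‖ ^ 2 := by
        funext u; rw [norm_sub_rev]
      rw [heq]
      have h0 := aux_hasFDerivAt_sqnorm (1 / (2 * γ)) x (prox x)
      have h2 : (2 * (1 / (2 * γ))) • (prox x - x) = γ⁻¹ • (prox x - x) := by
        congr 1; field_simp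
      rwa [h2] at h0
    have hsum : HasFDerivAt (fun y : EuclideanSpace ℝ (Fin d) => 1 / (2 * γ) * ‖x - y‖ ^ 2 + g y)
        ((InnerProductSpace.toDual ℝ (EuclideanSpace ℝ (Fin d))) (γ⁻¹ • (prox x - x))
          + (InnerProductSpace.toDual ℝ (EuclideanSpace ℝ (Fin d))) (g' (prox x))) (prox x) :=
      hf1.add (hg' (prox x)).hasFDerivAt
    have hzero := hmin.hasFDerivAt_eq_zero hsum
    rw [← map_add] at hzero
    have hz : γ⁻¹ • (prox x - x) + g' (prox x) = 0 := by
      have := (InnerProductSpace.toDual ℝ (EuclideanSpace ℝ (Fin d))).injective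
        (by rw [hzero]; simp : (InnerProductSpace.toDual ℝ (EuclideanSpace ℝ (Fin d)))
          (γ⁻¹ • (prox x - x) + g' (prox x)) = (InnerProductSpace.toDual ℝ (EuclideanSpace ℝ (Fin d))) 0)
      exact this
    have h4 : γ⁻¹ • (prox x - x) = -(g' (prox x)) := by
      have := eq_neg_of_add_eq_zero_left hz
      exact this
    have h5 : prox x - x = -(γ • g' (prox x)) := by
      have h6 := congrArg (fun v : EuclideanSpace ℝ (Fin d) => γ • v) h4
      simpa [smul_smul, mul_inv_cancel₀ hγ0, smul_neg] using h6
    show prox x + γ • g' (prox x) = x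
    rw [← sub_eq_zero, show prox x + γ • g' (prox x) - x
      = (prox x - x) + γ • g' (prox x) by abel, h5]
    abel
  have hmono : ∀ a b : EuclideanSpace ℝ (Fin d), (1 - γ * ρ) * ‖a - b‖ ^ 2 ≤ ⟪F a - F b, a - b⟫ :=
    fun a b => aux_strong_mono ρ γ hγ.le hweak hg' a b
  have hFinj : Function.Injective F := by
    intro a b hab
    by_contra hne
    have h1 := hmono a b
    rw [hab, sub_self, inner_zero_left] at h1
    have h2 : (0:ℝ) < ‖a - b‖ ^ 2 :=
      pow_pos (norm_pos_iff.2 (sub_ne_zero.2 hne)) 2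
    have h3 := mul_pos hγρ' h2
    linarith
  have hlip : ∀ u w : EuclideanSpace ℝ (Fin d), ‖prox u - prox w‖ ≤ (1 - γ * ρ)⁻¹ * ‖u - w‖ := by
    intro u w
    have h1 := hmono (prox u) (prox w)
    rw [foc u, foc w] at h1
    have h2 := real_inner_le_norm (u - w) (prox u - prox w)
    by_cases hz : prox u - prox w = 0
    · rw [hz, norm_zero]
      positivity
    · have hpos : 0 < ‖prox u - prox w‖ := norm_pos_iff.2 hz
      rw [inv_mul_eq_div, le_div_iff₀ hγρ']
      set n1 := ‖prox u - prox w‖ with hn1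
      set n2 := ‖u - w‖ with hn2
      set ip := ⟪u - w, prox u - prox w⟫ with hip
      nlinarith [h1, h2, hpos, norm_nonneg (u - w)]
  set e : EuclideanSpace ℝ (Fin d) → ℝ := fun w => 1 / (2 * γ) * ‖w - prox w‖ ^ 2 + g (prox w) with hedef
  have heinf : (fun w : EuclideanSpace ℝ (Fin d) => ⨅ y : EuclideanSpace ℝ (Fin d), 1 / (2 * γ) * ‖w - y‖ ^ 2 + g y) = e := by
    funext w
    refine le_antisymm (ciInf_le ⟨e w, ?_⟩ (prox w)) (le_ciInf (hprox w))
    rintro _ ⟨y, rfl⟩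
    exact hprox w y
  have key : ∀ w u : EuclideanSpace ℝ (Fin d), e u - e w - ⟪γ⁻¹ • (w - prox w), u - w⟫
      ≤ 1 / (2 * γ) * ‖u - w‖ ^ 2 := by
    intro w u
    have h1 := hprox u (prox w)
    have hexp : ‖u - prox w‖ ^ 2
        = ‖w - prox w‖ ^ 2 + 2 * ⟪w - prox w, u - w⟫ + ‖u - w‖ ^ 2 := by
      rw [show u - prox w = (w - prox w) + (u - w) by abel, norm_add_sq_real]
    rw [real_inner_smul_left]
    have h3 : ∀ t : ℝ, (1 / (2 * γ)) * (2 * t) = γ⁻¹ * t := by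
      intro t; field_simp
    have h4 : e u ≤ 1 / (2 * γ) * ‖u - prox w‖ ^ 2 + g (prox w) := h1
    rw [hexp] at h4
    have h5 : e w = 1 / (2 * γ) * ‖w - prox w‖ ^ 2 + g (prox w) := rfl
    set ip := ⟪w - prox w, u - w⟫ with hip
    set m1 := ‖w - prox w‖ ^ 2 with hm1
    set m2 := ‖u - w‖ ^ 2 with hm2
    have h6 := h3 ip
    have h7 : 1 / (2 * γ) * (m1 + 2 * ip + m2)
        = 1 / (2 * γ) * m1 + γ⁻¹ * ip + 1 / (2 * γ) * m2 := by
      rw [← h6]; ring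
    rw [h7] at h4
    linarith [h4, h5.le, h5.ge]
  set K : ℝ := γ⁻¹ * (1 + (1 - γ * ρ)⁻¹) with hKdef
  have hK0 : 0 ≤ K := by positivity
  set C : ℝ := K + 1 / (2 * γ) with hCdef
  have habs : ∀ z u : EuclideanSpace ℝ (Fin d), |e u - e z - ⟪γ⁻¹ • (z - prox z), u - z⟫| ≤ C * ‖u - z‖ ^ 2 := by
    intro z u
    have hup := key z u
    have hdown := key u z
    have hvdiff : ‖γ⁻¹ • (u - prox u) - γ⁻¹ • (z - prox z)‖ ≤ K * ‖u - z‖ := by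
      rw [← smul_sub, norm_smul, Real.norm_eq_abs, abs_of_pos (inv_pos.2 hγ)]
      have h6 : ‖(u - prox u) - (z - prox z)‖ ≤ ‖u - z‖ + ‖prox u - prox z‖ := by
        rw [show (u - prox u) - (z - prox z) = (u - z) - (prox u - prox z) by abel]
        exact norm_sub_le _ _
      have h7 := hlip u z
      have h8 : (0:ℝ) ≤ γ⁻¹ := (inv_pos.2 hγ).le
      have h9 : ‖(u - prox u) - (z - prox z)‖ ≤ (1 + (1 - γ * ρ)⁻¹) * ‖u - z‖ := by
        rw [add_mul, one_mul]; linarith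
      calc γ⁻¹ * ‖(u - prox u) - (z - prox z)‖
          ≤ γ⁻¹ * ((1 + (1 - γ * ρ)⁻¹) * ‖u - z‖) :=
            mul_le_mul_of_nonneg_left h9 h8
        _ = K * ‖u - z‖ := by rw [hKdef, mul_assoc]
    have hinner : ⟪γ⁻¹ • (u - prox u), z - u⟫ = -⟪γ⁻¹ • (u - prox u), u - z⟫ := by
      rw [show z - u = -(u - z) by abel, inner_neg_right]
    rw [hinner] at hdown
    have hcs : |⟪γ⁻¹ • (u - prox u) - γ⁻¹ • (z - prox z), u - z⟫|
        ≤ K * ‖u - z‖ ^ 2 := by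
      refine le_trans (abs_real_inner_le_norm _ _) ?_
      rw [pow_two, ← mul_assoc]
      exact mul_le_mul_of_nonneg_right hvdiff (norm_nonneg _)
    rw [inner_sub_left] at hcs
    have hcs' := abs_le.1 hcs
    have hnsr : ‖z - u‖ = ‖u - z‖ := norm_sub_rev z u
    rw [hnsr] at hdown
    rw [abs_le, hCdef, add_mul]
    set s := ⟪γ⁻¹ • (z - prox z), u - z⟫ with hs
    set t := ⟪γ⁻¹ • (u - prox u), u - z⟫ with hts
    set D2 := ‖u - z‖ ^ 2 with hD2
    have hKD : (0:ℝ) ≤ K * D2 := mul_nonneg hK0 (by positivity)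
    constructor
    · linarith [hcs'.1, hdown]
    · linarith [hcs'.2, hup, hKD]
  have part1 : ∀ z : EuclideanSpace ℝ (Fin d),
      HasGradientAt (fun w : EuclideanSpace ℝ (Fin d) => ⨅ y : EuclideanSpace ℝ (Fin d), 1 / (2 * γ) * ‖w - y‖ ^ 2 + g y)
        (γ⁻¹ • (z - prox z)) z := by
    intro z
    rw [heinf, hasGradientAt_iff_isLittleO]
    have h1 : (fun u : EuclideanSpace ℝ (Fin d) => e u - e z - ⟪γ⁻¹ • (z - prox z), u - z⟫)
        =O[nhds z] (fun u : EuclideanSpace ℝ (Fin d) => ‖u - z‖ ^ 2) := by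
      refine Asymptotics.isBigO_iff.2 ⟨C, Filter.Eventually.of_forall fun u => ?_⟩
      rw [Real.norm_eq_abs, Real.norm_eq_abs, abs_of_nonneg (by positivity : (0:ℝ) ≤ ‖u - z‖ ^ 2)]
      exact habs z u
    have h2 : (fun u : EuclideanSpace ℝ (Fin d) => ‖u - z‖ ^ 2) =o[nhds z] (fun u : EuclideanSpace ℝ (Fin d) => u - z) := by
      refine Asymptotics.isLittleO_iff.2 fun c hc => ?_
      have ht : Filter.Tendsto (fun u : EuclideanSpace ℝ (Fin d) => ‖u - z‖) (nhds z) (nhds 0) := by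
        have h3 : Filter.Tendsto (fun u : EuclideanSpace ℝ (Fin d) => u - z) (nhds z) (nhds (z - z)) :=
          ((continuous_id.sub continuous_const).tendsto z)
        rw [sub_self] at h3
        simpa using h3.norm
      filter_upwards [ht.eventually (eventually_le_nhds hc)] with u hu
      rw [Real.norm_eq_abs, abs_of_nonneg (by positivity : (0:ℝ) ≤ ‖u - z‖ ^ 2), pow_two]
      exact mul_le_mul_of_nonneg_right hu (norm_nonneg _)
    exact h1.trans_isLittleO h2
  refine ⟨part1, fun x => ?_⟩
  -- second part
  set p := prox x with hpdef
  have hBnorm : ‖-(γ • g'' p)‖ < 1 := by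
    rw [norm_neg]
    have hns : ‖γ • g'' p‖ = γ * ‖g'' p‖ := by
      rw [show ‖γ • g'' p‖ = ‖γ‖ * ‖g'' p‖ from norm_smul γ (g'' p),
        Real.norm_eq_abs, abs_of_pos hγ]
    rw [hns]
    calc γ * ‖g'' p‖ ≤ γ * Lg :=
          mul_le_mul_of_nonneg_left (hbound p ⟨x, rfl⟩) hγ.le
      _ < 1 := hγLg
  set U : (EuclideanSpace ℝ (Fin d) →L[ℝ] EuclideanSpace ℝ (Fin d))ˣ := Units.oneSub _ hBnorm with hUdef
  set eqv : EuclideanSpace ℝ (Fin d) ≃L[ℝ] EuclideanSpace ℝ (Fin d) := ContinuousLinearEquiv.ofUnit U with heqvdef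
  have heqv : (eqv : EuclideanSpace ℝ (Fin d) →L[ℝ] EuclideanSpace ℝ (Fin d)) = 1 + γ • g'' p := by
    show (1 : EuclideanSpace ℝ (Fin d) →L[ℝ] EuclideanSpace ℝ (Fin d)) - (-(γ • g'' p)) = 1 + γ • g'' p
    rw [sub_neg_eq_add]
  have hFd : ∀ y : EuclideanSpace ℝ (Fin d), HasFDerivAt F ((1 : EuclideanSpace ℝ (Fin d) →L[ℝ] EuclideanSpace ℝ (Fin d)) + γ • g'' y) y := by
    intro y
    have := (hasFDerivAt_id y).add ((hg'' y).const_smul γ)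
    rwa [ContinuousLinearMap.one_def]
  have hFc : ContDiff ℝ 1 F := by
    rw [contDiff_one_iff_fderiv]
    refine ⟨fun y => (hFd y).differentiableAt, ?_⟩
    have h9 : (fderiv ℝ F) = fun y => (1 : EuclideanSpace ℝ (Fin d) →L[ℝ] EuclideanSpace ℝ (Fin d)) + γ • g'' y :=
      funext fun y => (hFd y).fderiv
    rw [h9]
    exact continuous_const.add (hg''cont.const_smul γ)
  have hstrict : HasStrictFDerivAt F (eqv : EuclideanSpace ℝ (Fin d) →L[ℝ] EuclideanSpace ℝ (Fin d)) p := by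
    have h := (hFc.contDiffAt (x := p)).hasStrictFDerivAt one_ne_zero
    rwa [(hFd p).fderiv, ← heqv] at h
  have hlinv : ∀ᶠ z in nhds p, prox (F z) = z :=
    Filter.Eventually.of_forall fun z => hFinj (foc (F z))
  have hproxd : HasStrictFDerivAt prox ((eqv.symm : EuclideanSpace ℝ (Fin d) →L[ℝ] EuclideanSpace ℝ (Fin d))) (F p) :=
    hstrict.to_local_left_inverse hlinv
  rw [foc x] at hproxd
  refine ⟨(eqv.symm : EuclideanSpace ℝ (Fin d) →L[ℝ] EuclideanSpace ℝ (Fin d)), ?_, ?_, hproxd.hasFDerivAt, ?_⟩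
  · rw [← heqv]
    ext y
    simp [ContinuousLinearMap.mul_apply]
  · rw [← heqv]
    ext y
    simp [ContinuousLinearMap.mul_apply]
  · have h10 := ((hasFDerivAt_id x).sub hproxd.hasFDerivAt).const_smul γ⁻¹
    rw [ContinuousLinearMap.one_def]
    exact h10
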